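/- For all octonions a, b: ω(ab) + ω(ba) = ω(a)ω(b) + ω(b)ω(a), where ω is the left 8×8 real matrix representation of octonions. -/

import Mathlib

open Matrix Quaternion
open scoped Quaternion

noncomputable section

/-- Left real matrix representation of a quaternion in the basis 1, i, j, k. -/
def phi (a : ℍ[ℝ]) : Matrix (Fin 4) (Fin 4) ℝ :=
  !![a.re, -a.imI, -a.imJ, -a.imK;
     a.imI, a.re, -a.imK, a.imJ;
     a.imJ, a.imK, a.re, -a.imI;
     a.imK, -a.imJ, a.imI, a.re]

/-- K = diag(1, -1, -1, -1). -/
def Kmat : Matrix (Fin 4) (Fin 4) ℝ := Matrix.diagonal ![1, -1, -1, -1]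

/-- Right real matrix representation of a quaternion: τ(a) = K φ(a)ᵀ K. -/
def tau (a : ℍ[ℝ]) : Matrix (Fin 4) (Fin 4) ℝ := Kmat * (phi a)ᵀ * Kmat

/-- Coordinate vector of a quaternion in the basis 1, i, j, k. -/
def qvec (x : ℍ[ℝ]) : Fin 4 → ℝ := ![x.re, x.imI, x.imJ, x.imK]

/-- The octonions, as pairs of quaternions via the Cayley–Dickson process. -/
abbrev Octo := ℍ[ℝ] × ℍ[ℝ]

/-- Octonion multiplication:
  (a' + a''e)(b' + b''e) = (a'b' − b̄''a'') + (b''a' + a'' b̄')e. -/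
def Omul (a b : Octo) : Octo :=
  (a.1 * b.1 - star b.2 * a.2, b.2 * a.1 + a.2 * star b.1)

/-- Octonion conjugation. -/
def Oconj (a : Octo) : Octo := (star a.1, -a.2)

/-- Real part of an octonion. -/
def Ore (a : Octo) : ℝ := a.1.re

/-- The octonion 1. -/
def Oone : Octo := (1, 0)

/-- Squared norm of an octonion. -/
def OnormSq (a : Octo) : ℝ := Quaternion.normSq a.1 + Quaternion.normSq a.2

/-- Norm of an octonion. -/
def Onorm (a : Octo) : ℝ := Real.sqrt (OnormSq a)

/-- Left real matrix representation of an octonion a = a' + a''e: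
  ω(a) = [[φ(a'), −τ(a'')K], [φ(a'')K, τ(a')]]. -/
def omega (a : Octo) : Matrix (Fin 4 ⊕ Fin 4) (Fin 4 ⊕ Fin 4) ℝ :=
  Matrix.fromBlocks (phi a.1) (-(tau a.2 * Kmat)) (phi a.2 * Kmat) (tau a.1)

/-- Coordinate vector of an octonion in the basis 1, e₁, …, e₇. -/
def ovec (x : Octo) : Fin 4 ⊕ Fin 4 → ℝ := Sum.elim (qvec x.1) (qvec x.2)

theorem mul_fin_four {α} [NonUnitalNonAssocSemiring α]
    (a₁₁ a₁₂ a₁₃ a₁₄ a₂₁ a₂₂ a₂₃ a₂₄ a₃₁ a₃₂ a₃₃ a₃₄ a₄₁ a₄₂ a₄₃ a₄₄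
     b₁₁ b₁₂ b₁₃ b₁₄ b₂₁ b₂₂ b₂₃ b₂₄ b₃₁ b₃₂ b₃₃ b₃₄ b₄₁ b₄₂ b₄₃ b₄₄ : α) :
    !![a₁₁, a₁₂, a₁₃, a₁₄; a₂₁, a₂₂, a₂₃, a₂₄; a₃₁, a₃₂, a₃₃, a₃₄; a₄₁, a₄₂, a₄₃, a₄₄] *
    !![b₁₁, b₁₂, b₁₃, b₁₄; b₂₁, b₂₂, b₂₃, b₂₄; b₃₁, b₃₂, b₃₃, b₃₄; b₄₁, b₄₂, b₄₃, b₄₄] =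
    !![a₁₁*b₁₁ + a₁₂*b₂₁ + a₁₃*b₃₁ + a₁₄*b₄₁, a₁₁*b₁₂ + a₁₂*b₂₂ + a₁₃*b₃₂ + a₁₄*b₄₂,
       a₁₁*b₁₃ + a₁₂*b₂₃ + a₁₃*b₃₃ + a₁₄*b₄₃, a₁₁*b₁₄ + a₁₂*b₂₄ + a₁₃*b₃₄ + a₁₄*b₄₄;
       a₂₁*b₁₁ + a₂₂*b₂₁ + a₂₃*b₃₁ + a₂₄*b₄₁, a₂₁*b₁₂ + a₂₂*b₂₂ + a₂₃*b₃₂ + a₂₄*b₄₂,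
       a₂₁*b₁₃ + a₂₂*b₂₃ + a₂₃*b₃₃ + a₂₄*b₄₃, a₂₁*b₁₄ + a₂₂*b₂₄ + a₂₃*b₃₄ + a₂₄*b₄₄;
       a₃₁*b₁₁ + a₃₂*b₂₁ + a₃₃*b₃₁ + a₃₄*b₄₁, a₃₁*b₁₂ + a₃₂*b₂₂ + a₃₃*b₃₂ + a₃₄*b₄₂,
       a₃₁*b₁₃ + a₃₂*b₂₃ + a₃₃*b₃₃ + a₃₄*b₄₃, a₃₁*b₁₄ + a₃₂*b₂₄ + a₃₃*b₃₄ + a₃₄*b₄₄;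
       a₄₁*b₁₁ + a₄₂*b₂₁ + a₄₃*b₃₁ + a₄₄*b₄₁, a₄₁*b₁₂ + a₄₂*b₂₂ + a₄₃*b₃₂ + a₄₄*b₄₂,
       a₄₁*b₁₃ + a₄₂*b₂₃ + a₄₃*b₃₃ + a₄₄*b₄₃, a₄₁*b₁₄ + a₄₂*b₂₄ + a₄₃*b₃₄ + a₄₄*b₄₄] := by
  ext i j
  fin_cases i <;> fin_cases j <;>
    simp [Matrix.mul_apply, dotProduct, Fin.sum_univ_succ, ← add_assoc]

theorem add_fin_four {α} [AddCommMonoid α]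
    (a₁₁ a₁₂ a₁₃ a₁₄ a₂₁ a₂₂ a₂₃ a₂₄ a₃₁ a₃₂ a₃₃ a₃₄ a₄₁ a₄₂ a₄₃ a₄₄
     b₁₁ b₁₂ b₁₃ b₁₄ b₂₁ b₂₂ b₂₃ b₂₄ b₃₁ b₃₂ b₃₃ b₃₄ b₄₁ b₄₂ b₄₃ b₄₄ : α) :
    !![a₁₁, a₁₂, a₁₃, a₁₄; a₂₁, a₂₂, a₂₃, a₂₄; a₃₁, a₃₂, a₃₃, a₃₄; a₄₁, a₄₂, a₄₃, a₄₄] +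
    !![b₁₁, b₁₂, b₁₃, b₁₄; b₂₁, b₂₂, b₂₃, b₂₄; b₃₁, b₃₂, b₃₃, b₃₄; b₄₁, b₄₂, b₄₃, b₄₄] =
    !![a₁₁+b₁₁, a₁₂+b₁₂, a₁₃+b₁₃, a₁₄+b₁₄; a₂₁+b₂₁, a₂₂+b₂₂, a₂₃+b₂₃, a₂₄+b₂₄;
       a₃₁+b₃₁, a₃₂+b₃₂, a₃₃+b₃₃, a₃₄+b₃₄; a₄₁+b₄₁, a₄₂+b₄₂, a₄₃+b₄₃, a₄₄+b₄₄] := by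
  ext i j
  fin_cases i <;> fin_cases j <;> rfl

theorem neg_fin_four {α} [AddGroup α]
    (a₁₁ a₁₂ a₁₃ a₁₄ a₂₁ a₂₂ a₂₃ a₂₄ a₃₁ a₃₂ a₃₃ a₃₄ a₄₁ a₄₂ a₄₃ a₄₄ : α) :
    -!![a₁₁, a₁₂, a₁₃, a₁₄; a₂₁, a₂₂, a₂₃, a₂₄; a₃₁, a₃₂, a₃₃, a₃₄; a₄₁, a₄₂, a₄₃, a₄₄] =
    !![-a₁₁, -a₁₂, -a₁₃, -a₁₄; -a₂₁, -a₂₂, -a₂₃, -a₂₄;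
       -a₃₁, -a₃₂, -a₃₃, -a₃₄; -a₄₁, -a₄₂, -a₄₃, -a₄₄] := by
  ext i j
  fin_cases i <;> fin_cases j <;> rfl

theorem transpose_fin_four {α}
    (a₁₁ a₁₂ a₁₃ a₁₄ a₂₁ a₂₂ a₂₃ a₂₄ a₃₁ a₃₂ a₃₃ a₃₄ a₄₁ a₄₂ a₄₃ a₄₄ : α) :
    !![a₁₁, a₁₂, a₁₃, a₁₄; a₂₁, a₂₂, a₂₃, a₂₄; a₃₁, a₃₂, a₃₃, a₃₄; a₄₁, a₄₂, a₄₃, a₄₄]ᵀ =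
    !![a₁₁, a₂₁, a₃₁, a₄₁; a₁₂, a₂₂, a₃₂, a₄₂; a₁₃, a₂₃, a₃₃, a₄₃; a₁₄, a₂₄, a₃₄, a₄₄] := by
  ext i j
  fin_cases i <;> fin_cases j <;> rfl

theorem mat4_eq {α} {a₁₁ a₁₂ a₁₃ a₁₄ a₂₁ a₂₂ a₂₃ a₂₄ a₃₁ a₃₂ a₃₃ a₃₄ a₄₁ a₄₂ a₄₃ a₄₄
     b₁₁ b₁₂ b₁₃ b₁₄ b₂₁ b₂₂ b₂₃ b₂₄ b₃₁ b₃₂ b₃₃ b₃₄ b₄₁ b₄₂ b₄₃ b₄₄ : α}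
    (h₁₁ : a₁₁ = b₁₁) (h₁₂ : a₁₂ = b₁₂) (h₁₃ : a₁₃ = b₁₃) (h₁₄ : a₁₄ = b₁₄)
    (h₂₁ : a₂₁ = b₂₁) (h₂₂ : a₂₂ = b₂₂) (h₂₃ : a₂₃ = b₂₃) (h₂₄ : a₂₄ = b₂₄)
    (h₃₁ : a₃₁ = b₃₁) (h₃₂ : a₃₂ = b₃₂) (h₃₃ : a₃₃ = b₃₃) (h₃₄ : a₃₄ = b₃₄)
    (h₄₁ : a₄₁ = b₄₁) (h₄₂ : a₄₂ = b₄₂) (h₄₃ : a₄₃ = b₄₃) (h₄₄ : a₄₄ = b₄₄) :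
    !![a₁₁, a₁₂, a₁₃, a₁₄; a₂₁, a₂₂, a₂₃, a₂₄; a₃₁, a₃₂, a₃₃, a₃₄; a₄₁, a₄₂, a₄₃, a₄₄] =
    !![b₁₁, b₁₂, b₁₃, b₁₄; b₂₁, b₂₂, b₂₃, b₂₄; b₃₁, b₃₂, b₃₃, b₃₄; b₄₁, b₄₂, b₄₃, b₄₄] := by
  subst_vars; rfl

theorem Kmat_eq : Kmat = !![1,0,0,0; 0,-1,0,0; 0,0,-1,0; 0,0,0,-1] := by
  ext i j
  fin_cases i <;> fin_cases j <;> rfl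

theorem tau_eq (a : ℍ[ℝ]) : tau a =
    !![a.re, -a.imI, -a.imJ, -a.imK;
       a.imI, a.re, a.imK, -a.imJ;
       a.imJ, -a.imK, a.re, a.imI;
       a.imK, a.imJ, -a.imI, a.re] := by
  rw [tau, Kmat_eq, phi, transpose_fin_four, mul_fin_four, mul_fin_four]
  exact mat4_eq (by ring) (by ring) (by ring) (by ring) (by ring) (by ring) (by ring) (by ring)
    (by ring) (by ring) (by ring) (by ring) (by ring) (by ring) (by ring) (by ring)

theorem blk11 (a1 a2 b1 b2 : ℍ[ℝ]) :
    phi (a1 * b1 - star b2 * a2) + phi (b1 * a1 - star a2 * b2) =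
      phi a1 * phi b1 + -(tau a2 * Kmat) * (phi b2 * Kmat) +
      (phi b1 * phi a1 + -(tau b2 * Kmat) * (phi a2 * Kmat)) := by
  simp only [phi, tau_eq, Kmat_eq, Quaternion.re_mul, Quaternion.imI_mul,
    Quaternion.imJ_mul, Quaternion.imK_mul, Quaternion.re_star, Quaternion.imI_star,
    Quaternion.imJ_star, Quaternion.imK_star, Quaternion.re_sub, Quaternion.imI_sub,
    Quaternion.imJ_sub, Quaternion.imK_sub, Quaternion.re_add, Quaternion.imI_add,
    Quaternion.imJ_add, Quaternion.imK_add]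
  simp only [mul_fin_four, neg_fin_four, add_fin_four]
  exact mat4_eq (by ring) (by ring) (by ring) (by ring) (by ring) (by ring) (by ring) (by ring)
    (by ring) (by ring) (by ring) (by ring) (by ring) (by ring) (by ring) (by ring)

theorem blk12 (a1 a2 b1 b2 : ℍ[ℝ]) :
    -(tau (b2 * a1 + a2 * star b1) * Kmat) + -(tau (a2 * b1 + b2 * star a1) * Kmat) =
      phi a1 * -(tau b2 * Kmat) + -(tau a2 * Kmat) * tau b1 +
      (phi b1 * -(tau a2 * Kmat) + -(tau b2 * Kmat) * tau a1) := by
  simp only [phi, tau_eq, Kmat_eq, Quaternion.re_mul, Quaternion.imI_mul,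
    Quaternion.imJ_mul, Quaternion.imK_mul, Quaternion.re_star, Quaternion.imI_star,
    Quaternion.imJ_star, Quaternion.imK_star, Quaternion.re_sub, Quaternion.imI_sub,
    Quaternion.imJ_sub, Quaternion.imK_sub, Quaternion.re_add, Quaternion.imI_add,
    Quaternion.imJ_add, Quaternion.imK_add]
  simp only [mul_fin_four, neg_fin_four, add_fin_four]
  exact mat4_eq (by ring) (by ring) (by ring) (by ring) (by ring) (by ring) (by ring) (by ring)
    (by ring) (by ring) (by ring) (by ring) (by ring) (by ring) (by ring) (by ring)

theorem blk21 (a1 a2 b1 b2 : ℍ[ℝ]) :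
    phi (b2 * a1 + a2 * star b1) * Kmat + phi (a2 * b1 + b2 * star a1) * Kmat =
      phi a2 * Kmat * phi b1 + tau a1 * (phi b2 * Kmat) +
      (phi b2 * Kmat * phi a1 + tau b1 * (phi a2 * Kmat)) := by
  simp only [phi, tau_eq, Kmat_eq, Quaternion.re_mul, Quaternion.imI_mul,
    Quaternion.imJ_mul, Quaternion.imK_mul, Quaternion.re_star, Quaternion.imI_star,
    Quaternion.imJ_star, Quaternion.imK_star, Quaternion.re_sub, Quaternion.imI_sub,
    Quaternion.imJ_sub, Quaternion.imK_sub, Quaternion.re_add, Quaternion.imI_add,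
    Quaternion.imJ_add, Quaternion.imK_add]
  simp only [mul_fin_four, neg_fin_four, add_fin_four]
  exact mat4_eq (by ring) (by ring) (by ring) (by ring) (by ring) (by ring) (by ring) (by ring)
    (by ring) (by ring) (by ring) (by ring) (by ring) (by ring) (by ring) (by ring)

theorem blk22 (a1 a2 b1 b2 : ℍ[ℝ]) :
    tau (a1 * b1 - star b2 * a2) + tau (b1 * a1 - star a2 * b2) =
      phi a2 * Kmat * -(tau b2 * Kmat) + tau a1 * tau b1 +
      (phi b2 * Kmat * -(tau a2 * Kmat) + tau b1 * tau a1) := by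
  simp only [phi, tau_eq, Kmat_eq, Quaternion.re_mul, Quaternion.imI_mul,
    Quaternion.imJ_mul, Quaternion.imK_mul, Quaternion.re_star, Quaternion.imI_star,
    Quaternion.imJ_star, Quaternion.imK_star, Quaternion.re_sub, Quaternion.imI_sub,
    Quaternion.imJ_sub, Quaternion.imK_sub, Quaternion.re_add, Quaternion.imI_add,
    Quaternion.imJ_add, Quaternion.imK_add]
  simp only [mul_fin_four, neg_fin_four, add_fin_four]
  exact mat4_eq (by ring) (by ring) (by ring) (by ring) (by ring) (by ring) (by ring) (by ring)
    (by ring) (by ring) (by ring) (by ring) (by ring) (by ring) (by ring) (by ring)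

theorem omega_jordan (a b : Octo) :
    omega (Omul a b) + omega (Omul b a) = omega a * omega b + omega b * omega a := by
  obtain ⟨a1, a2⟩ := a
  obtain ⟨b1, b2⟩ := b
  simp only [omega, Omul, Matrix.fromBlocks_multiply, Matrix.fromBlocks_add]
  rw [Matrix.fromBlocks_inj.mpr]
  exact ⟨blk11 a1 a2 b1 b2, blk12 a1 a2 b1 b2, blk21 a1 a2 b1 b2, blk22 a1 a2 b1 b2⟩
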